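/- Let B : X₀ → X₀ be a continuous linear operator on a complex Banach space X₀ possessing a regular skeleton chain of length p (complex Banach spaces X₀,…,X_p, operators A_{2i} : X_{i−1} → X_i, A_{2i−1} : X_i → X_{i−1} with B = A₁ ∘ A₂, A_{2i} ∘ A_{2i−1} = A_{2i+1} ∘ A_{2i+2} for i = 1,…,p−1, and B^p = A_{2p} ∘ A_{2p−1} continuously invertible). Suppose the spectrum of B^p lies in the open left half-plane {z ∈ ℂ : Re z < 0}. Then every differentiable solution x : [0,∞) → X₀ of the homogeneous equation B(x'(t)) = x(t) satisfies ‖x(t)‖ → 0 as t → ∞; i.e., the regularized initial-value problem B(dx/dt) = x, M x(0) = c₀ is asymptotically stable. -/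

import Mathlib

set_option maxHeartbeats 1000000
set_option synthInstance.maxHeartbeats 1000000


open ContinuousLinearMap Filter
open NormedSpace

section SkelAux

variable {Y : Type*} [NormedAddCommGroup Y] [NormedSpace ℂ Y] [CompleteSpace Y]

private lemma skel_radius {S : Type*} [NormedCommRing S] [NormedAlgebra ℂ S] [CompleteSpace S]
    (a₀ : S) (hσ : spectrum ℂ a₀ ⊆ {z : ℂ | z.re < 0}) :
    ∃ (N : ℕ) (ρ : ℝ), 0 ≤ ρ ∧ ρ < 1 ∧ ∀ n, N ≤ n → ‖(exp a₀) ^ n‖ ≤ ρ ^ n := by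
  letI : NormedAlgebra ℚ S := .restrictScalars ℚ ℂ S
  -- first, a uniform bound on the spectrum of `exp a₀`
  obtain ⟨r, hr1, hr⟩ : ∃ r : NNReal, r < 1 ∧ ∀ z ∈ spectrum ℂ (exp a₀), ‖z‖₊ ≤ r := by
    have hchar : ∀ z ∈ spectrum ℂ (exp a₀), ∃ w ∈ spectrum ℂ a₀, z = Complex.exp w := by
      intro z hz
      obtain ⟨φ, hφ⟩ := WeakDual.CharacterSpace.mem_spectrum_iff_exists.mp hz
      refine ⟨φ a₀, AlgHom.apply_mem_spectrum φ a₀, ?_⟩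
      rw [← hφ, map_exp φ (map_continuous φ)]
      rw [← Complex.exp_eq_exp_ℂ]
    rcases (spectrum ℂ a₀).eq_empty_or_nonempty with he | hne
    · refine ⟨0, by norm_num, ?_⟩
      intro z hz
      obtain ⟨w, hw, -⟩ := hchar z hz
      simp [he] at hw
    · obtain ⟨z₀, hz₀K, hz₀max⟩ := (spectrum.isCompact (𝕜 := ℂ) a₀).exists_isMaxOn hne
        (Complex.continuous_re.continuousOn)
      refine ⟨⟨Real.exp z₀.re, Real.exp_nonneg _⟩, ?_, ?_⟩
      · have : Real.exp z₀.re < 1 := Real.exp_lt_one_iff.mpr (hσ hz₀K)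
        exact_mod_cast this
      · intro z hz
        obtain ⟨w, hw, rfl⟩ := hchar z hz
        have hnw : ‖Complex.exp w‖ = Real.exp w.re := by
          rw [Complex.norm_exp]
        have hle : Real.exp w.re ≤ Real.exp z₀.re := Real.exp_le_exp.mpr (hz₀max hw)
        refine NNReal.coe_le_coe.mp ?_
        show ‖Complex.exp w‖ ≤ Real.exp z₀.re
        rw [hnw]; exact hle
  -- now use Gelfand's formula
  set b := exp a₀ with hb
  have hρ : spectralRadius ℂ b < 1 := by
    have hle : spectralRadius ℂ b ≤ r := by
      rw [spectralRadius]
      exact iSup₂_le fun z hz => by exact_mod_cast ENNReal.coe_le_coe.mpr (hr z hz)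
    exact lt_of_le_of_lt hle (by exact_mod_cast hr1)
  obtain ⟨c, hc1, hc2⟩ := exists_between hρ
  have hcne : c ≠ ⊤ := (hc2.trans_le le_top).ne
  have hev := (spectrum.pow_nnnorm_pow_one_div_tendsto_nhds_spectralRadius b).eventually_lt_const hc1
  obtain ⟨N, hN⟩ := hev.exists_forall_of_atTop
  refine ⟨max N 1, c.toNNReal, c.toNNReal.coe_nonneg, ?_, ?_⟩
  · have h1 : (c.toNNReal : ENNReal) ≤ c := ENNReal.coe_toNNReal_le_self
    have h2 : (c.toNNReal : ENNReal) < 1 := lt_of_le_of_lt h1 hc2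
    rw [← ENNReal.coe_one, ENNReal.coe_lt_coe] at h2
    exact_mod_cast h2
  · intro n hn
    have hn1 : 1 ≤ n := le_trans (le_max_right _ _) hn
    have hNn : N ≤ n := le_trans (le_max_left _ _) hn
    have h := hN n hNn
    have hcoe : c = (c.toNNReal : ENNReal) := (ENNReal.coe_toNNReal hcne).symm
    have hble : (‖b ^ n‖₊ : ENNReal) ≤ c ^ (n : ℝ) := by
      have h3 := ENNReal.rpow_le_rpow h.le (by positivity : (0:ℝ) ≤ (n:ℝ))
      rwa [← ENNReal.rpow_mul, one_div_mul_cancel (Nat.cast_ne_zero.mpr (by omega)),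
        ENNReal.rpow_one] at h3
    rw [hcoe] at hble
    rw [ENNReal.rpow_natCast] at hble
    have h2 : ‖b ^ n‖₊ ≤ c.toNNReal ^ n := by
      rwa [← ENNReal.coe_pow, ENNReal.coe_le_coe] at hble
    exact_mod_cast h2

private lemma skel_tail (A : Y →L[ℂ] Y) (N : ℕ) (ρ : ℝ) (hρ0 : 0 ≤ ρ) (hρ1 : ρ < 1)
    (hpow : ∀ n, N ≤ n → ‖(exp A) ^ n‖ ≤ ρ ^ n) :
    Tendsto (fun t : ℝ => ‖exp (t • A)‖) atTop (nhds 0) := by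
  letI : NormedAlgebra ℚ (Y →L[ℂ] Y) := .restrictScalars ℚ ℂ (Y →L[ℂ] Y)
  obtain ⟨C, hC⟩ := (isCompact_Icc (a := (0:ℝ)) (b := 1)).exists_bound_of_continuousOn
    (((exp_continuous (𝔸 := Y →L[ℂ] Y)).comp
      (continuous_id.smul continuous_const : Continuous fun s : ℝ => s • A)).continuousOn)
  have hbound : ∀ᶠ t : ℝ in atTop, ‖exp (t • A)‖ ≤ C * ρ ^ (⌊t⌋₊) := by
    filter_upwards [eventually_ge_atTop (0:ℝ), eventually_ge_atTop (N:ℝ)] with t ht0 htN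
    have hsplit : t • A = (t - ⌊t⌋₊) • A + ((⌊t⌋₊ : ℕ) : ℝ) • A := by
      rw [← add_smul]; ring_nf
    have hcomm : Commute ((t - ⌊t⌋₊) • A) (((⌊t⌋₊ : ℕ) : ℝ) • A) :=
      ((Commute.refl A).smul_left _).smul_right _
    rw [hsplit, exp_add_of_commute hcomm, Nat.cast_smul_eq_nsmul ℝ, exp_nsmul]
    have h1 : ‖exp ((t - ⌊t⌋₊) • A)‖ ≤ C := by
      have := Nat.lt_floor_add_one t
      exact hC _ ⟨sub_nonneg.mpr (Nat.floor_le ht0), by linarith⟩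
    have h2 : ‖(exp A) ^ (⌊t⌋₊)‖ ≤ ρ ^ (⌊t⌋₊) := hpow _ (Nat.le_floor htN)
    calc ‖exp ((t - ⌊t⌋₊) • A) * (exp A) ^ (⌊t⌋₊)‖
        ≤ ‖exp ((t - ⌊t⌋₊) • A)‖ * ‖(exp A) ^ (⌊t⌋₊)‖ := norm_mul_le _ _
      _ ≤ C * ρ ^ (⌊t⌋₊) := by
          have hC0 : (0:ℝ) ≤ C :=
            le_trans (norm_nonneg _) (hC 0 ⟨le_refl 0, zero_le_one⟩)
          exact mul_le_mul h1 h2 (norm_nonneg _) hC0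
  have hlim : Tendsto (fun t : ℝ => C * ρ ^ (⌊t⌋₊)) atTop (nhds 0) := by
    have := (tendsto_pow_atTop_nhds_zero_of_lt_one hρ0 hρ1).comp (tendsto_nat_floor_atTop (α := ℝ))
    simpa using this.const_mul C
  exact squeeze_zero' (by filter_upwards with t using norm_nonneg _) hbound hlim

private lemma skel_decay (A : Y →L[ℂ] Y)
    (hres : ∀ z : ℂ, 0 ≤ z.re → IsUnit (algebraMap ℂ (Y →L[ℂ] Y) z - A)) :
    Tendsto (fun t : ℝ => ‖exp (t • A)‖) atTop (nhds 0) := by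
  classical
  letI : NormedAlgebra ℚ (Y →L[ℂ] Y) := .restrictScalars ℚ ℂ (Y →L[ℂ] Y)
  let inv : ℂ → (Y →L[ℂ] Y) := fun z => Ring.inverse (algebraMap ℂ (Y →L[ℂ] Y) z - A)
  let G : Set (Y →L[ℂ] Y) := insert A (inv '' {z | 0 ≤ z.re})
  have key : ∀ (b : Y →L[ℂ] Y) (z : ℂ), 0 ≤ z.re → Commute b A → Commute b (inv z) := by
    intro b z hz hbA
    have hu := hres z hz
    have h1 : Commute b (algebraMap ℂ (Y →L[ℂ] Y) z - A) :=
      Commute.sub_right (Algebra.commute_algebraMap_right z b) hbA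
    have h2 : inv z = ((hu.unit⁻¹ : _ˣ) : (Y →L[ℂ] Y)) :=
      (congrArg Ring.inverse hu.unit_spec.symm).trans (Ring.inverse_unit _)
    rw [h2]
    exact Commute.units_inv_right (by rwa [hu.unit_spec])
  have hAG : A ∈ G := Set.mem_insert _ _
  have hGcomm : ∀ a ∈ G, ∀ b ∈ G, a * b = b * a := by
    have hcA : ∀ c ∈ G, Commute c A := by
      rintro c (rfl | ⟨z, hz, rfl⟩)
      · exact Commute.refl c
      · exact (key A z hz (Commute.refl A)).symm
    rintro a ha b (rfl | ⟨z, hz, rfl⟩)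
    · exact hcA a ha
    · exact key a z hz (hcA a ha)
  set S₀ := Algebra.adjoin ℂ G with hS₀
  set S := S₀.topologicalClosure with hS
  letI : CommRing ↥S := S₀.commRingTopologicalClosure
    (by
      letI := Algebra.adjoinCommRingOfComm ℂ hGcomm
      exact fun a b => mul_comm a b)
  letI : NormedCommRing ↥S := { (inferInstance : NormedRing ↥S) with mul_comm := mul_comm }
  letI : CompleteSpace ↥S := (Subalgebra.isClosed_topologicalClosure S₀).completeSpace_coe
  letI : NormedAlgebra ℚ ↥S := .restrictScalars ℚ ℂ ↥S
  have hmem : ∀ g ∈ G, g ∈ S := fun g hg =>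
    S₀.le_topologicalClosure (Algebra.subset_adjoin hg)
  set a₀ : ↥S := ⟨A, hmem A hAG⟩ with ha₀
  have hσ : spectrum ℂ a₀ ⊆ {z : ℂ | z.re < 0} := by
    intro z hz
    by_contra hzre
    rw [Set.mem_setOf_eq, not_lt] at hzre
    rw [spectrum.mem_iff] at hz
    refine hz ?_
    have hu := hres z hzre
    refine ⟨⟨algebraMap ℂ ↥S z - a₀, ⟨inv z, hmem _ (Set.mem_insert_of_mem _ ⟨z, hzre, rfl⟩)⟩,
      ?_, ?_⟩, rfl⟩
    · ext1
      push_cast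
      exact Ring.mul_inverse_cancel _ hu
    · ext1
      push_cast
      exact Ring.inverse_mul_cancel _ hu
  have hrad := skel_radius a₀ hσ
  obtain ⟨N, ρ, hρ0, hρ1, hpow⟩ := hrad
  have hcoe : ((exp a₀ : ↥S) : Y →L[ℂ] Y) = exp A := by
    have := @map_exp ↥S _ _ (.restrictScalars ℚ ℂ ↥S) _ _ _ _ _ _ (S.val) (continuous_subtype_val) a₀
    simpa using this
  refine skel_tail A N ρ hρ0 hρ1 ?_
  intro n hn
  have h := hpow n hn
  calc ‖(exp A) ^ n‖ = ‖(exp a₀) ^ n‖ := by rw [← hcoe]; norm_cast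
    _ ≤ ρ ^ n := h

private lemma skel_sol (A : Y →L[ℂ] Y) (y : ℝ → Y)
    (hy : ∀ t ∈ Set.Ici (0:ℝ), HasDerivWithinAt y (A (y t)) (Set.Ici 0) t) :
    ∀ t ∈ Set.Ici (0:ℝ), y t = (exp (t • A)) (y 0) := by
  classical
  letI : NormedAlgebra ℚ (Y →L[ℂ] Y) := .restrictScalars ℚ ℂ (Y →L[ℂ] Y)
  set L := (ContinuousLinearMap.restrictScalarsIsometry ℂ Y Y ℝ ℝ).toContinuousLinearMap with hL
  set c : ℝ → (Y →L[ℝ] Y) := fun t => L (exp (t • (-A))) with hc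
  have hcderiv : ∀ t : ℝ, HasDerivAt c (L ((-A) * exp (t • (-A)))) t := fun t =>
    L.hasFDerivAt.comp_hasDerivAt t (hasDerivAt_exp_smul_const' (-A) t)
  set g : ℝ → Y := fun t => (c t) (y t) with hg
  have hgderiv : ∀ t ∈ Set.Ici (0:ℝ), HasDerivWithinAt g 0 (Set.Ici 0) t := by
    intro t ht
    have h := ((hcderiv t).hasDerivWithinAt).clm_apply (hy t ht)
    convert h using 1
    have hcomm : Commute A (exp (t • (-A))) :=
      (((Commute.refl A).neg_right).smul_right t).exp_right
    show (0 : Y) = (L ((-A) * exp (t • (-A)))) (y t) + (c t) (A (y t))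
    have h1 : (L ((-A) * exp (t • (-A)))) (y t) = -(A ((exp (t • (-A))) (y t))) := by
      simp [hL, ContinuousLinearMap.restrictScalarsIsometry]; rfl
    rw [h1]
    have h2 : (c t) (A (y t)) = A ((exp (t • (-A))) (y t)) := by
      have h3 := hcomm.symm.eq
      calc (c t) (A (y t)) = (exp (t • (-A)) * A) (y t) := rfl
        _ = (A * exp (t • (-A))) (y t) := by rw [h3]
        _ = A ((exp (t • (-A))) (y t)) := rfl
    rw [h2]; abel
  have hconst : ∀ t ∈ Set.Ici (0:ℝ), g t = g 0 := by
    intro t ht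
    have hb := (convex_Ici (0:ℝ)).norm_image_sub_le_of_norm_hasDerivWithin_le
      (f' := fun _ => (0:Y)) (C := 0) (fun s hs => hgderiv s hs) (fun s hs => by simp)
      (Set.self_mem_Ici) ht
    have hz : ‖g t - g 0‖ ≤ 0 := by simpa using hb
    rw [← sub_eq_zero]
    exact norm_le_zero_iff.mp hz
  intro t ht
  have h0 : g 0 = y 0 := by simp [hg, hc, hL]
  have h1 : (c t) (y t) = y 0 := by rw [← h0]; exact hconst t ht
  have h2 : (exp (t • A)) ((exp (t • (-A))) (y t)) = y t := by
    have hcomm : Commute (t • A) (t • (-A)) :=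
      (((Commute.refl A).neg_right).smul_left t).smul_right t
    have hone : exp (t • A) * exp (t • (-A)) = 1 := by
      rw [← exp_add_of_commute hcomm]
      have hzero : t • A + t • (-A) = 0 := by simp
      rw [hzero, exp_zero]
    calc (exp (t • A)) ((exp (t • (-A))) (y t))
        = (exp (t • A) * exp (t • (-A))) (y t) := rfl
      _ = y t := by rw [hone]; rfl
  have h3 : (c t) (y t) = (exp (t • (-A))) (y t) := rfl
  rw [← h2, h3.symm.trans h1]

end SkelAux

/-- The forward maps of the chain, composed. -/
private noncomputable def skelM {X : ℕ → Type*} [∀ n, NormedAddCommGroup (X n)]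
    [∀ n, NormedSpace ℂ (X n)] (Af : ∀ k : ℕ, X k →L[ℂ] X (k + 1)) :
    ∀ k : ℕ, X 0 →L[ℂ] X k
  | 0 => ContinuousLinearMap.id ℂ (X 0)
  | (k+1) => (Af k).comp (skelM Af k)


/-- if `B` has a regular skeleton chain of length `p = q + 1 ≥ 1` on
complex Banach spaces and the spectrum of the final chain member
`B^p = A_{2p} ∘ A_{2p-1}` lies in the open left half-plane, then every
differentiable solution of the homogeneous equation `B x' = x` on `[0, ∞)`
satisfies `‖x t‖ → 0` as `t → ∞` (asymptotic stability of the regularized IVP).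
Here `Af k = A_{2(k+1)} : X_k → X_{k+1}` and `Ab k = A_{2k+1} : X_{k+1} → X_k`. -/
theorem stmt5
    {X : ℕ → Type*} [∀ n, NormedAddCommGroup (X n)] [∀ n, NormedSpace ℂ (X n)]
    [∀ n, CompleteSpace (X n)]
    (p q : ℕ) (hp : p = q + 1)
    (Af : ∀ k : ℕ, X k →L[ℂ] X (k + 1)) (Ab : ∀ k : ℕ, X (k + 1) →L[ℂ] X k)
    (B : X 0 →L[ℂ] X 0) (hB : B = (Ab 0).comp (Af 0))
    (hchain : ∀ k : ℕ, k + 1 < p → (Af k).comp (Ab k) = (Ab (k + 1)).comp (Af (k + 1)))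
    (hreg : IsUnit ((Af q).comp (Ab q) : X (q + 1) →L[ℂ] X (q + 1)))
    (hspec : spectrum ℂ ((Af q).comp (Ab q) : X (q + 1) →L[ℂ] X (q + 1))
        ⊆ {z : ℂ | z.re < 0})
    (x x' : ℝ → X 0)
    (hx : ∀ t ∈ Set.Ici (0 : ℝ), HasDerivWithinAt x (x' t) (Set.Ici 0) t)
    (hsol : ∀ t ∈ Set.Ici (0 : ℝ), B (x' t) = x t) :
    Tendsto (fun t : ℝ => ‖x t‖) atTop (nhds 0) := by
  subst hp
  set C : X (q+1) →L[ℂ] X (q+1) := (Af q).comp (Ab q) with hC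
  set u := hreg.unit with hu
  set A : X (q+1) →L[ℂ] X (q+1) := ((u⁻¹ : _ˣ) : X (q+1) →L[ℂ] X (q+1)) with hA
  set M := skelM Af with hM
  -- chain identities
  have hP : ∀ k, k ≤ q → (M (k+1)).comp B = ((Af k).comp (Ab k)).comp (M (k+1)) := by
    intro k hk
    induction k with
    | zero =>
      ext v
      simp [hM, skelM, hB]
    | succ k ih =>
      have hk' : k ≤ q := by omega
      have hch := hchain k (by omega)
      ext v
      have h1 : (M (k+1)) (B v) = ((Af k).comp (Ab k)) (M (k+1) v) :=
        DFunLike.congr_fun (ih hk') v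
      have h2 : ∀ w, (Af k) ((Ab k) w) = (Ab (k+1)) ((Af (k+1)) w) := fun w =>
        DFunLike.congr_fun hch w
      show (M (k+2)) (B v) = ((Af (k+1)).comp (Ab (k+1))) ((M (k+2)) v)
      have hMsucc : ∀ w, M (k+2) w = Af (k+1) (M (k+1) w) := fun _ => rfl
      rw [hMsucc (B v), h1]
      simp only [ContinuousLinearMap.comp_apply] at *
      rw [h2, hMsucc v]
  have hQ : ∀ k, k ≤ q → (M k).comp B = (Ab k).comp (M (k+1)) := by
    intro k hk
    cases k with
    | zero =>
      ext v
      simp [hM, skelM, hB]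
    | succ j =>
      have hj : j ≤ q := by omega
      have hch := hchain j (by omega)
      rw [hP j hj, hch]
      ext v
      rfl
  have htop : (M (q+1)).comp B = C.comp (M (q+1)) := hP q le_rfl
  -- the top-level function y
  set y : ℝ → X (q+1) := fun t => M (q+1) (x t) with hy
  have hyderiv : ∀ t ∈ Set.Ici (0:ℝ),
      HasDerivWithinAt (fun s => M (q+1) (x s)) (M (q+1) (x' t)) (Set.Ici 0) t := fun t ht =>
    ((M (q+1)).restrictScalars ℝ).hasFDerivAt.comp_hasDerivWithinAt t (hx t ht)
  have huC : (u : X (q+1) →L[ℂ] X (q+1)) = C := hreg.unit_spec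
  have hAC : ∀ w, A (C w) = w := by
    intro w
    have h1 : ((u⁻¹ : _ˣ) : X (q+1) →L[ℂ] X (q+1)) * (u : X (q+1) →L[ℂ] X (q+1)) = 1 :=
      u.inv_mul
    calc A (C w) = (((u⁻¹ : _ˣ) : X (q+1) →L[ℂ] X (q+1)) * (u : X (q+1) →L[ℂ] X (q+1))) w := by
          rw [huC]; rfl
      _ = w := by rw [h1]; rfl
  have hyA : ∀ t ∈ Set.Ici (0:ℝ), HasDerivWithinAt y (A (y t)) (Set.Ici 0) t := by
    intro t ht
    have h1 : y t = C (M (q+1) (x' t)) := by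
      rw [hy]
      show M (q+1) (x t) = C (M (q+1) (x' t))
      rw [← hsol t ht]
      exact DFunLike.congr_fun htop (x' t)
    have h2 : A (y t) = M (q+1) (x' t) := by rw [h1, hAC]
    rw [h2]
    exact hyderiv t ht
  -- resolvent condition for A
  have hres : ∀ z : ℂ, 0 ≤ z.re →
      IsUnit (algebraMap ℂ (X (q+1) →L[ℂ] X (q+1)) z - A) := by
    intro z hz
    rcases eq_or_ne z 0 with rfl | hz0
    · have hAunit : IsUnit A := ⟨u⁻¹, rfl⟩
      have h0 : algebraMap ℂ (X (q+1) →L[ℂ] X (q+1)) 0 - A = -A := by simp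
      rw [h0]
      exact hAunit.neg
    · -- z ≠ 0 : factor
      have hzinv : (z⁻¹ : ℂ) ∉ spectrum ℂ C := by
        intro hmem
        have := hspec hmem
        rw [Set.mem_setOf_eq, Complex.inv_re] at this
        have h4 : 0 < Complex.normSq z := Complex.normSq_pos.mpr hz0
        exact absurd this (not_lt.mpr (div_nonneg hz h4.le))
      have hunit1 : IsUnit (algebraMap ℂ (X (q+1) →L[ℂ] X (q+1)) z⁻¹ - C) :=
        spectrum.notMem_iff.mp hzinv
      have hfac : algebraMap ℂ (X (q+1) →L[ℂ] X (q+1)) z - A =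
          A * (algebraMap ℂ (X (q+1) →L[ℂ] X (q+1)) z * (u : X (q+1) →L[ℂ] X (q+1)) - 1) := by
        have hmid : A * (algebraMap ℂ (X (q+1) →L[ℂ] X (q+1)) z * (u : X (q+1) →L[ℂ] X (q+1)))
            = algebraMap ℂ (X (q+1) →L[ℂ] X (q+1)) z := by
          calc A * (algebraMap ℂ (X (q+1) →L[ℂ] X (q+1)) z * (u : X (q+1) →L[ℂ] X (q+1)))
              = algebraMap ℂ (X (q+1) →L[ℂ] X (q+1)) z *
                (A * (u : X (q+1) →L[ℂ] X (q+1))) := by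
                rw [← mul_assoc, ← mul_assoc, (Algebra.commute_algebraMap_right z A).eq]
            _ = algebraMap ℂ (X (q+1) →L[ℂ] X (q+1)) z := by
                rw [hA, u.inv_mul, mul_one]
        rw [mul_sub, mul_one, hmid]
      rw [hfac]
      have hAunit : IsUnit A := ⟨u⁻¹, rfl⟩
      refine hAunit.mul ?_
      have hfac2 : algebraMap ℂ (X (q+1) →L[ℂ] X (q+1)) z * (u : X (q+1) →L[ℂ] X (q+1)) - 1 =
          algebraMap ℂ (X (q+1) →L[ℂ] X (q+1)) z *
            (-(algebraMap ℂ (X (q+1) →L[ℂ] X (q+1)) z⁻¹ - C)) := by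
        rw [huC, mul_neg, mul_sub, ← map_mul, mul_inv_cancel₀ hz0, map_one, neg_sub]
      rw [hfac2]
      exact ((Ne.isUnit hz0).map (algebraMap ℂ (X (q+1) →L[ℂ] X (q+1)))).mul hunit1.neg
  -- solution formula and decay
  have hsolform := skel_sol A y hyA
  have hdecay := skel_decay A hres
  -- downward induction: x t = D (y t)
  have hD : ∀ j k, q + 1 = k + j →
      ∃ D : X (q+1) →L[ℂ] X k, ∀ t ∈ Set.Ici (0:ℝ), M k (x t) = D (y t) := by
    intro j
    induction j with
    | zero =>
      intro k hk
      obtain rfl : k = q + 1 := by omega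
      exact ⟨ContinuousLinearMap.id ℂ _, fun t ht => rfl⟩
    | succ j ih =>
      intro k hk
      obtain ⟨D', hD'⟩ := ih (k+1) (by omega)
      have hkq : k ≤ q := by omega
      refine ⟨(Ab k).comp (D'.comp A), ?_⟩
      intro t ht
      have hud : UniqueDiffWithinAt ℝ (Set.Ici (0:ℝ)) t := uniqueDiffOn_Ici 0 t ht
      have h1 : HasDerivWithinAt (fun s => M (k+1) (x s)) (M (k+1) (x' t)) (Set.Ici 0) t :=
        ((M (k+1)).restrictScalars ℝ).hasFDerivAt.comp_hasDerivWithinAt t (hx t ht)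
      have h2 : HasDerivWithinAt (fun s => D' (y s)) (D' (A (y t))) (Set.Ici 0) t :=
        (D'.restrictScalars ℝ).hasFDerivAt.comp_hasDerivWithinAt t (hyA t ht)
      have h2' : HasDerivWithinAt (fun s => M (k+1) (x s)) (D' (A (y t))) (Set.Ici 0) t :=
        h2.congr (fun s hs => hD' s hs) (hD' t ht)
      have heq : M (k+1) (x' t) = D' (A (y t)) := by
        rw [← h1.derivWithin hud, ← h2'.derivWithin hud]
      calc M k (x t) = M k (B (x' t)) := by rw [hsol t ht]
        _ = (Ab k) (M (k+1) (x' t)) := DFunLike.congr_fun (hQ k hkq) (x' t)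
        _ = (Ab k) (D' (A (y t))) := by rw [heq]
        _ = ((Ab k).comp (D'.comp A)) (y t) := rfl
  obtain ⟨D, hDx⟩ := hD (q+1) 0 (by omega)
  -- final squeeze
  have hxD : ∀ t ∈ Set.Ici (0:ℝ), x t = D ((exp (t • A)) (y 0)) := by
    intro t ht
    have h1 : M 0 (x t) = x t := rfl
    rw [← h1, hDx t ht, hsolform t ht]
  have hbound : ∀ᶠ t : ℝ in atTop, ‖x t‖ ≤ ‖D‖ * (‖exp (t • A)‖ * ‖y 0‖) := by
    filter_upwards [eventually_ge_atTop (0:ℝ)] with t ht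
    rw [hxD t ht]
    refine le_trans (D.le_opNorm _) (mul_le_mul_of_nonneg_left ?_ (norm_nonneg D))
    exact (exp (t • A)).le_opNorm _
  have hlim : Tendsto (fun t : ℝ => ‖D‖ * (‖exp (t • A)‖ * ‖y 0‖)) atTop (nhds 0) := by
    have := (hdecay.mul_const ‖y 0‖).const_mul ‖D‖
    simpa using this
  exact squeeze_zero' (by filter_upwards with t using norm_nonneg _) hbound hlim
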